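/- Let M be a 3×3 orthogonal matrix over a finite field of characteristic 2. Then M is MDS if and only if all nine entries of M are nonzero. -/

import Mathlib

open Matrix

set_option maxHeartbeats 1600000 in
/-- A `3×3` orthogonal matrix over a finite field of characteristic `2` is MDS iff all
of its entries are nonzero. -/
theorem stmt_13 {F : Type*} [Field F] [Fintype F] [CharP F 2]
    (M : Matrix (Fin 3) (Fin 3) F) (horth : M * Mᵀ = 1) :
    (∀ (k : ℕ) (r c : Fin k → Fin 3), Function.Injective r → Function.Injective c →
        (M.submatrix r c).det ≠ 0) ↔
      (∀ i j, M i j ≠ 0) := by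
  have hdet2 : M.det * M.det = 1 := by
    have := congrArg Matrix.det horth
    rwa [det_mul, det_transpose, det_one] at this
  have hMdet : M.det ≠ 0 := fun h0 => by simp [h0] at hdet2
  constructor
  · intro h i j
    have := h 1 ![i] ![j] (Function.injective_of_subsingleton _)
      (Function.injective_of_subsingleton _)
    rw [det_fin_one] at this
    simpa using this
  · intro h k r c hr hc
    have hMM : Mᵀ * M = 1 := mul_eq_one_comm.mp horth
    have hadje : adjugate M = M.det • Mᵀ := by
      calc adjugate M = (Mᵀ * M) * adjugate M := by rw [hMM, one_mul]
      _ = Mᵀ * (M.det • 1) := by rw [Matrix.mul_assoc, mul_adjugate]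
      _ = M.det • Mᵀ := by rw [Matrix.mul_smul, Matrix.mul_one]
    have H := hadje
    rw [adjugate_fin_three] at H
    have hE00 : M 1 1 * M 2 2 + M 1 2 * M 2 1 = M.det * M 0 0 := by
      have := congrFun (congrFun H 0) 0
      simpa [CharTwo.sub_eq_add, CharTwo.neg_eq] using this
    have hE01 : M 0 1 * M 2 2 + M 0 2 * M 2 1 = M.det * M 1 0 := by
      have := congrFun (congrFun H 0) 1
      simpa [CharTwo.sub_eq_add, CharTwo.neg_eq] using this
    have hE02 : M 0 1 * M 1 2 + M 0 2 * M 1 1 = M.det * M 2 0 := by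
      have := congrFun (congrFun H 0) 2
      simpa [CharTwo.sub_eq_add, CharTwo.neg_eq] using this
    have hE10 : M 1 0 * M 2 2 + M 1 2 * M 2 0 = M.det * M 0 1 := by
      have := congrFun (congrFun H 1) 0
      simpa [CharTwo.sub_eq_add, CharTwo.neg_eq] using this
    have hE11 : M 0 0 * M 2 2 + M 0 2 * M 2 0 = M.det * M 1 1 := by
      have := congrFun (congrFun H 1) 1
      simpa [CharTwo.sub_eq_add, CharTwo.neg_eq] using this
    have hE12 : M 0 0 * M 1 2 + M 0 2 * M 1 0 = M.det * M 2 1 := by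
      have := congrFun (congrFun H 1) 2
      simpa [CharTwo.sub_eq_add, CharTwo.neg_eq] using this
    have hE20 : M 1 0 * M 2 1 + M 1 1 * M 2 0 = M.det * M 0 2 := by
      have := congrFun (congrFun H 2) 0
      simpa [CharTwo.sub_eq_add, CharTwo.neg_eq] using this
    have hE21 : M 0 0 * M 2 1 + M 0 1 * M 2 0 = M.det * M 1 2 := by
      have := congrFun (congrFun H 2) 1
      simpa [CharTwo.sub_eq_add, CharTwo.neg_eq] using this
    have hE22 : M 0 0 * M 1 1 + M 0 1 * M 1 0 = M.det * M 2 2 := by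
      have := congrFun (congrFun H 2) 2
      simpa [CharTwo.sub_eq_add, CharTwo.neg_eq] using this
    have hm0 : (⟨0, by omega⟩ : Fin 3) = 0 := rfl
    have hm1 : (⟨1, by omega⟩ : Fin 3) = 1 := rfl
    have hm2 : (⟨2, by omega⟩ : Fin 3) = 2 := rfl
    have key2 : ∀ a0 a1 b0 b1 : Fin 3, a0 ≠ a1 → b0 ≠ b1 →
        M a0 b0 * M a1 b1 - M a0 b1 * M a1 b0 ≠ 0 := by
      intro a0 a1 b0 b1 ha hb
      fin_cases a0 <;> fin_cases a1 <;> fin_cases b0 <;> fin_cases b1 <;>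
        first
        | exact absurd rfl ha
        | exact absurd rfl hb
        | (intro hz
           simp only [CharTwo.sub_eq_add, hm0, hm1, hm2] at hz
           first
           | exact mul_ne_zero hMdet (h 0 0) (by linear_combination hz - hE00)
           | exact mul_ne_zero hMdet (h 1 0) (by linear_combination hz - hE01)
           | exact mul_ne_zero hMdet (h 2 0) (by linear_combination hz - hE02)
           | exact mul_ne_zero hMdet (h 0 1) (by linear_combination hz - hE10)
           | exact mul_ne_zero hMdet (h 1 1) (by linear_combination hz - hE11)
           | exact mul_ne_zero hMdet (h 2 1) (by linear_combination hz - hE12)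
           | exact mul_ne_zero hMdet (h 0 2) (by linear_combination hz - hE20)
           | exact mul_ne_zero hMdet (h 1 2) (by linear_combination hz - hE21)
           | exact mul_ne_zero hMdet (h 2 2) (by linear_combination hz - hE22))
    have hk : k ≤ 3 := by simpa using Fintype.card_le_of_injective r hr
    interval_cases k
    · simp [Matrix.det_fin_zero]
    · simpa [det_fin_one] using h (r 0) (c 0)
    · have := key2 (r 0) (r 1) (c 0) (c 1)
        (fun e => by have := hr e; simp at this)
        (fun e => by have := hc e; simp at this)
      rw [det_fin_two]
      simpa using this
    · have hrb : Function.Bijective r := (Finite.injective_iff_bijective).mp hr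
      have hcb : Function.Bijective c := (Finite.injective_iff_bijective).mp hc
      set σ := Equiv.ofBijective r hrb
      set τ := Equiv.ofBijective c hcb
      have hsub : M.submatrix r c = (M.submatrix id ⇑τ).submatrix ⇑σ id := rfl
      rw [hsub, Matrix.det_permute, Matrix.det_permute']
      refine mul_ne_zero ?_ (mul_ne_zero ?_ hMdet)
      · rcases Int.units_eq_one_or (Equiv.Perm.sign σ) with hs | hs <;> simp [hs]
      · rcases Int.units_eq_one_or (Equiv.Perm.sign τ) with hs | hs <;> simp [hs]
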